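/- Let X ⊂ ℝ^d be a finite spanning set and θ ∈ ℝ^d, and set κ₀ = max_{x∈X} 1/μ'(xᵀθ). Then min over probability distributions λ on X of max_{x∈X} ‖x‖²_{H_λ(θ)^{-1}} is at most κ₀·d, where H_λ(θ) = Σ_{x∈X} λ(x) μ'(xᵀθ) x xᵀ. -/

import Mathlib

open Matrix

noncomputable def μ (z : ℝ) : ℝ := 1 / (1 + Real.exp (-z))

/-- `H_λ(θ) = ∑_{x ∈ X} λ(x) μ'(xᵀθ) x xᵀ`. -/
noncomputable def Hmat {d : ℕ} (X : Finset (Fin d → ℝ)) (θ : Fin d → ℝ)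
    (w : (Fin d → ℝ) → ℝ) : Matrix (Fin d) (Fin d) ℝ :=
  ∑ x ∈ X, (w x * deriv μ (x ⬝ᵥ θ)) • Matrix.vecMulVec x x

lemma hasDerivAt_mu (z : ℝ) :
    HasDerivAt μ (Real.exp (-z) / (1 + Real.exp (-z)) ^ 2) z := by
  have h1 : HasDerivAt (fun z : ℝ => 1 + Real.exp (-z)) (-Real.exp (-z)) z := by
    have h := (Real.hasDerivAt_exp (-z)).comp z ((hasDerivAt_id z).neg)
    exact ((hasDerivAt_const z (1 : ℝ)).add h).congr_deriv (by simp)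
  have hne : (1 + Real.exp (-z)) ≠ 0 := by positivity
  have h2 := h1.inv hne
  have hμ : μ = fun y => (1 + Real.exp (-y))⁻¹ := by
    funext y; simp [μ, one_div]
  rw [hμ]
  rw [neg_neg] at h2
  exact h2

lemma deriv_mu_pos (z : ℝ) : 0 < deriv μ z := by
  rw [(hasDerivAt_mu z).deriv]
  positivity

lemma trace_mul_vecMulVec {d : ℕ} (A : Matrix (Fin d) (Fin d) ℝ) (x : Fin d → ℝ) :
    (A * Matrix.vecMulVec x x).trace = x ⬝ᵥ (A *ᵥ x) := by
  simp only [Matrix.trace, Matrix.diag, Matrix.mul_apply, Matrix.vecMulVec_apply,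
    dotProduct, Matrix.mulVec, Finset.mul_sum]
  exact Finset.sum_congr rfl fun i _ => Finset.sum_congr rfl fun j _ => by ring

lemma sum_mulVec' {α : Type*} (s : Finset α) {d : ℕ} (M : α → Matrix (Fin d) (Fin d) ℝ)
    (v : Fin d → ℝ) : (∑ x ∈ s, M x) *ᵥ v = ∑ x ∈ s, M x *ᵥ v :=
  map_sum (AddMonoidHom.mk' (fun A : Matrix (Fin d) (Fin d) ℝ => A *ᵥ v)
    (fun A B => Matrix.add_mulVec A B v)) M s

lemma dotProduct_sum' {α : Type*} (s : Finset α) {d : ℕ} (v : Fin d → ℝ)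
    (f : α → Fin d → ℝ) : v ⬝ᵥ (∑ x ∈ s, f x) = ∑ x ∈ s, v ⬝ᵥ f x :=
  map_sum (AddMonoidHom.mk' (fun u : Fin d → ℝ => v ⬝ᵥ u)
    (fun a b => dotProduct_add v a b)) f s

lemma vecMulVec_mulVec' {d : ℕ} (x v : Fin d → ℝ) :
    Matrix.vecMulVec x x *ᵥ v = (x ⬝ᵥ v) • x := by
  ext i
  simp only [Matrix.mulVec, dotProduct, Matrix.vecMulVec_apply, Pi.smul_apply, smul_eq_mul,
    Finset.sum_mul, Finset.mul_sum]
  exact Finset.sum_congr rfl fun j _ => by ring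

theorem G_optimal_design_le_kappa_d (d : ℕ) (X : Finset (Fin d → ℝ))
    (hne : X.Nonempty)
    (hspan : Submodule.span ℝ (X : Set (Fin d → ℝ)) = ⊤)
    (θ : Fin d → ℝ) (κ₀ : ℝ)
    (hκ : κ₀ = X.sup' hne (fun x => 1 / deriv μ (x ⬝ᵥ θ))) :
    ∃ w : (Fin d → ℝ) → ℝ, (∀ x ∈ X, 0 ≤ w x) ∧ (∑ x ∈ X, w x) = 1 ∧
      IsUnit (Hmat X θ w).det ∧
      ∀ x ∈ X, x ⬝ᵥ ((Hmat X θ w)⁻¹ *ᵥ x) ≤ κ₀ * d := by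
  classical
  set c : (Fin d → ℝ) → ℝ := fun x => deriv μ (x ⬝ᵥ θ) with hc
  have hcpos : ∀ x, 0 < c x := fun x => deriv_mu_pos _
  set F : (↥X → ℝ) → Matrix (Fin d) (Fin d) ℝ :=
    fun p => ∑ x : ↥X, (p x * c (x : Fin d → ℝ)) •
      Matrix.vecMulVec (x : Fin d → ℝ) (x : Fin d → ℝ) with hF
  -- quadratic form of F
  have hquad : ∀ (p : ↥X → ℝ) (v : Fin d → ℝ),
      v ⬝ᵥ (F p *ᵥ v) = ∑ x : ↥X, (p x * c (x : Fin d → ℝ)) * ((x : Fin d → ℝ) ⬝ᵥ v) ^ 2 := by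
    intro p v
    rw [hF, sum_mulVec', dotProduct_sum']
    refine Finset.sum_congr rfl fun x _ => ?_
    rw [Matrix.smul_mulVec, vecMulVec_mulVec', dotProduct_smul, dotProduct_smul]
    simp only [smul_eq_mul]
    rw [dotProduct_comm v (x : Fin d → ℝ)]
    ring
  -- hermitian
  have hherm : ∀ p : ↥X → ℝ, (F p).IsHermitian := by
    intro p
    refine Matrix.IsHermitian.ext fun i j => ?_
    simp only [hF, Matrix.sum_apply, Matrix.smul_apply, Matrix.vecMulVec_apply, smul_eq_mul,
      star_trivial]
    exact Finset.sum_congr rfl fun x _ => by ring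
  -- linearity on convex combinations
  have hlin : ∀ (a b : ℝ) (p q : ↥X → ℝ), F (a • p + b • q) = a • F p + b • F q := by
    intro a b p q
    simp only [hF]
    rw [Finset.smul_sum, Finset.smul_sum, ← Finset.sum_add_distrib]
    refine Finset.sum_congr rfl fun x _ => ?_
    simp only [Pi.add_apply, Pi.smul_apply, smul_eq_mul, smul_smul]
    rw [add_mul, add_smul, mul_assoc, mul_assoc]
  -- uniform design is positive definite
  have hXne : Nonempty ↥X := ⟨⟨hne.choose, hne.choose_spec⟩⟩
  have hcard : (0 : ℝ) < (X.card : ℝ) := by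
    exact_mod_cast Finset.card_pos.mpr hne
  set u : ↥X → ℝ := fun _ => (X.card : ℝ)⁻¹ with hu
  have humem : u ∈ stdSimplex ℝ ↥X := by
    constructor
    · intro x; positivity
    · simp only [hu, Finset.sum_const, nsmul_eq_mul]
      rw [Finset.card_univ, Fintype.card_coe]
      field_simp
  have hposdef : (F u).PosDef := by
    refine Matrix.PosDef.of_dotProduct_mulVec_pos (hherm u) fun v hv => ?_
    rw [star_trivial, hquad]
    have hex : ∃ x : ↥X, (x : Fin d → ℝ) ⬝ᵥ v ≠ 0 := by
      by_contra hall
      push_neg at hall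
      apply hv
      have hker : ∀ y ∈ Submodule.span ℝ (X : Set (Fin d → ℝ)), y ⬝ᵥ v = 0 := by
        intro y hy
        induction hy using Submodule.span_induction with
        | mem z hz => exact hall ⟨z, hz⟩
        | zero => simp
        | add a b _ _ ha hb => rw [add_dotProduct, ha, hb, add_zero]
        | smul r a _ ha => rw [smul_dotProduct, ha, smul_zero]
      have hvv : v ⬝ᵥ v = 0 := hker v (by rw [hspan]; trivial)
      exact dotProduct_self_eq_zero.mp hvv
    obtain ⟨x₀, hx₀⟩ := hex
    refine Finset.sum_pos' (fun x _ => ?_) ⟨x₀, Finset.mem_univ _, ?_⟩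
    · have := (hcpos (x : Fin d → ℝ)).le
      positivity
    · have h1 : 0 < u x₀ * c (x₀ : Fin d → ℝ) := by
        have := hcpos (x₀ : Fin d → ℝ); simp only [hu]; positivity
      exact mul_pos h1 (pow_two_pos_of_ne_zero hx₀)
  -- maximize det over the simplex
  have hcontF : Continuous F := by
    refine continuous_finset_sum _ fun x _ => ?_
    exact ((continuous_apply x).mul continuous_const).smul continuous_const
  obtain ⟨p, hpmem, hpmax⟩ := (isCompact_stdSimplex ℝ ↥X).exists_isMaxOn
    ⟨u, humem⟩ (hcontF.matrix_det.continuousOn)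
  set H := F p with hH
  have hdetpos : 0 < H.det := lt_of_lt_of_le hposdef.det_pos (hpmax humem)
  have hunit : IsUnit H.det := hdetpos.ne'.isUnit
  have hHinv : H * H⁻¹ = 1 := Matrix.mul_nonsing_inv H hunit
  -- key first-order optimality bound
  have hkey : ∀ x₀ : ↥X,
      c (x₀ : Fin d → ℝ) * ((x₀ : Fin d → ℝ) ⬝ᵥ (H⁻¹ *ᵥ (x₀ : Fin d → ℝ))) ≤ (d : ℝ) := by
    intro x₀
    set e : ↥X → ℝ := fun y => if x₀ = y then 1 else 0 with he
    have hemem : e ∈ stdSimplex ℝ ↥X := ite_eq_mem_stdSimplex ℝ x₀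
    set M := F e with hM
    have hMval : M = c (x₀ : Fin d → ℝ) •
        Matrix.vecMulVec (x₀ : Fin d → ℝ) (x₀ : Fin d → ℝ) := by
      simp only [hM, hF]
      rw [Finset.sum_eq_single x₀]
      · simp [he]
      · intro b _ hb
        simp [he, Ne.symm hb]
      · intro h; exact absurd (Finset.mem_univ x₀) h
    set B := H⁻¹ * M - 1 with hB
    -- trace of B
    have htrB : B.trace =
        c (x₀ : Fin d → ℝ) * ((x₀ : Fin d → ℝ) ⬝ᵥ (H⁻¹ *ᵥ (x₀ : Fin d → ℝ))) - (d : ℝ) := by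
      rw [hB, Matrix.trace_sub, Matrix.trace_one, hMval, Matrix.mul_smul, Matrix.trace_smul,
        trace_mul_vecMulVec]
      simp
    -- the polynomial remainder
    set q := ((1 + (Polynomial.X : Polynomial ℝ) • B.map Polynomial.C).det).divX.divX with hq
    have hineq : ∀ t : ℝ, t ∈ Set.Ioc (0 : ℝ) 1 → B.trace + q.eval t * t ≤ 0 := by
      intro t ht
      have hpt : (1 - t) • p + t • e ∈ stdSimplex ℝ ↥X :=
        (convex_stdSimplex ℝ ↥X) hpmem hemem (by linarith [ht.2]) ht.1.le (by ring)
      have hdle : (F ((1 - t) • p + t • e)).det ≤ H.det := hpmax hpt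
      have hfact : F ((1 - t) • p + t • e) = H * (1 + t • B) := by
        rw [hlin, hB]
        rw [Matrix.mul_add, Matrix.mul_one, Matrix.mul_smul, Matrix.mul_sub,
          ← Matrix.mul_assoc, hHinv, Matrix.one_mul, Matrix.mul_one]
        rw [smul_sub, sub_smul, one_smul]
        abel
      rw [hfact, Matrix.det_mul, Matrix.det_one_add_smul] at hdle
      have h1 : B.trace * t + q.eval t * t ^ 2 ≤ 0 := by
        nlinarith [hdetpos]
      nlinarith [ht.1]
    -- take the limit t → 0⁺
    have hlim : Filter.Tendsto (fun t : ℝ => B.trace + q.eval t * t)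
        (nhdsWithin 0 (Set.Ioi 0)) (nhds (B.trace)) := by
      have hcont : Continuous (fun t : ℝ => B.trace + q.eval t * t) :=
        continuous_const.add ((q.continuous).mul continuous_id)
      have := hcont.tendsto 0
      simp only [Polynomial.eval_zero, mul_zero, add_zero] at this
      exact this.mono_left nhdsWithin_le_nhds
    have hle : B.trace ≤ 0 := by
      refine le_of_tendsto hlim ?_
      filter_upwards [Ioc_mem_nhdsGT_of_mem (Set.mem_Ico.mpr ⟨le_refl 0, zero_lt_one⟩)]
        with t ht using hineq t ht
    rw [htrB] at hle
    linarith
  -- assemble the witness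
  set w0 : (Fin d → ℝ) → ℝ := fun x => if h : x ∈ X then p ⟨x, h⟩ else 0 with hw0
  have hHeq : Hmat X θ w0 = H := by
    show (∑ x ∈ X, (w0 x * deriv μ (x ⬝ᵥ θ)) • Matrix.vecMulVec x x) = H
    calc ∑ x ∈ X, (w0 x * deriv μ (x ⬝ᵥ θ)) • Matrix.vecMulVec x x
        = ∑ x ∈ X.attach, (p x * c (x : Fin d → ℝ)) •
            Matrix.vecMulVec (x : Fin d → ℝ) (x : Fin d → ℝ) := by
          rw [← Finset.sum_attach X (fun x => (w0 x * deriv μ (x ⬝ᵥ θ)) •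
            Matrix.vecMulVec x x)]
          exact Finset.sum_congr rfl fun x _ => by simp only [hw0, dif_pos x.2, hc]
      _ = H := by simp only [hH, hF, Finset.univ_eq_attach]
  refine ⟨w0, ?_, ?_, ?_, ?_⟩
  · intro x hx
    simp only [hw0, dif_pos hx]
    exact hpmem.1 _
  · have hsum := hpmem.2
    rw [Finset.univ_eq_attach] at hsum
    calc ∑ x ∈ X, w0 x
        = ∑ x ∈ X.attach, p x := by
          rw [← Finset.sum_attach X w0]
          exact Finset.sum_congr rfl fun x _ => by simp only [hw0, dif_pos x.2]
      _ = 1 := hsum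
  · rw [hHeq]; exact hunit
  · intro x hx
    rw [hHeq]
    have hk := hkey ⟨x, hx⟩
    have hcx := hcpos x
    have hκx : 1 / c x ≤ κ₀ := by
      rw [hκ]
      exact Finset.le_sup' (fun y => 1 / deriv μ (y ⬝ᵥ θ)) hx
    have hd0 : (0 : ℝ) ≤ (d : ℝ) := Nat.cast_nonneg d
    have h1 : x ⬝ᵥ (H⁻¹ *ᵥ x) ≤ (d : ℝ) * (1 / c x) := by
      rw [mul_one_div, le_div_iff₀ hcx]
      linarith [hk]
    calc x ⬝ᵥ (H⁻¹ *ᵥ x) ≤ (d : ℝ) * (1 / c x) := h1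
      _ ≤ (d : ℝ) * κ₀ := mul_le_mul_of_nonneg_left hκx hd0
      _ = κ₀ * d := mul_comm _ _
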